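/- arXiv:1305.0482 — 3 statements merged into one kernel-verified Lean document; each statement's English description precedes it below -/
import Mathlib

section
/- An algebraic integer β has degree e over a number field k and H(β) ≤ 𝓗 if and only if β is a root of a monic irreducible polynomial f ∈ O_k[X] of degree e with M^k(f) ≤ 𝓗^e. -/
open Polynomial

/-- The Mahler measure of a complex polynomial. -/
noncomputable def mahlerMeasure (f : Polynomial ℂ) : ℝ :=
  ‖f.leadingCoeff‖ * (f.roots.map fun z => max 1 ‖z‖).prod

/-- The absolute multiplicative Weil height of an algebraic integer `α ∈ ℂ`. -/
noncomputable def height (α : ℂ) : ℝ :=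
  _root_.mahlerMeasure ((minpoly ℤ α).map (Int.castRingHom ℂ)) ^
    ((1 : ℝ) / (minpoly ℤ α).natDegree)

/-- The field Mahler measure `M^k(f) = ∏_{i=1}^{r+s} M(σᵢ f)^{dᵢ/m}`; equivalently (since
complex conjugate embeddings give the same Mahler measure) the product over all `m`
embeddings `φ : k →+* ℂ` of `M(φ f)^{1/m}`. -/
noncomputable def Mk (k : Type*) [Field k] [CharZero k] (f : Polynomial k) : ℝ :=
  ∏ᶠ φ : k →+* ℂ, _root_.mahlerMeasure (f.map φ) ^ ((1 : ℝ) / Module.finrank ℚ k)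


open Polynomial IntermediateField Module
set_option maxHeartbeats 2000000
set_option synthInstance.maxHeartbeats 400000

section Fiber
variable {A B K : Type*} [Field A] [Field B] [Field K] [Algebra A B]

def fiberEquiv [Algebra A K] (φ : A →+* K) (h : algebraMap A K = φ) :
    {ψ : B →+* K // ψ.comp (algebraMap A B) = φ} ≃ (B →ₐ[A] K) where
  toFun ψ :=
    { toRingHom := ψ.1
      commutes' := fun a => by
        have := RingHom.congr_fun ψ.2 a
        simp only [RingHom.coe_comp, Function.comp_apply] at this
        rw [h]; exact this }
  invFun Ψ := ⟨Ψ.toRingHom, by ext a; simp only [RingHom.coe_comp, Function.comp_apply,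
    AlgHom.toRingHom_eq_coe, RingHom.coe_coe]; rw [Ψ.commutes a, h]⟩
  left_inv ψ := rfl
  right_inv Ψ := rfl

lemma card_fiber [CharZero A] [FiniteDimensional A B] (φ : A →+* ℂ) :
    Nat.card {ψ : B →+* ℂ // ψ.comp (algebraMap A B) = φ} = finrank A B := by
  letI : Algebra A ℂ := φ.toAlgebra
  rw [Nat.card_congr (fiberEquiv φ rfl), Nat.card_eq_fintype_card]
  exact AlgHom.card A B ℂ

end Fiber

section Adjoin
variable {A L K : Type*} [Field A] [Field L] [Field K] [Algebra A L] {β : L}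
  (hβ : IsIntegral A β)

include hβ in
lemma ringHom_ext_gen {ψ₁ ψ₂ : ↥(IntermediateField.adjoin A {β}) →+* K}
    (hc : ψ₁.comp (algebraMap A ↥(IntermediateField.adjoin A {β}))
        = ψ₂.comp (algebraMap A ↥(IntermediateField.adjoin A {β})))
    (hg : ψ₁ (AdjoinSimple.gen A β) = ψ₂ (AdjoinSimple.gen A β)) : ψ₁ = ψ₂ := by
  letI : Algebra A K := (ψ₁.comp (algebraMap A ↥(IntermediateField.adjoin A {β}))).toAlgebra
  have h12 : fiberEquiv (B := ↥(IntermediateField.adjoin A {β}))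
      (ψ₁.comp (algebraMap A ↥(IntermediateField.adjoin A {β}))) rfl ⟨ψ₁, rfl⟩
      = fiberEquiv _ rfl ⟨ψ₂, hc.symm⟩ := by
    apply (adjoin.powerBasis hβ).algHom_ext
    have hgen : (adjoin.powerBasis hβ).gen = AdjoinSimple.gen A β := by
      simp [adjoin.powerBasis]
    rw [hgen]
    exact hg
  exact congrArg AlgHom.toRingHom h12

lemma minpoly_gen_eq : minpoly A (AdjoinSimple.gen A β) = minpoly A β := by
  have : algebraMap ↥(IntermediateField.adjoin A {β}) L (AdjoinSimple.gen A β) = β := rfl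
  conv_rhs => rw [← this]
  rw [minpoly.algebraMap_eq (algebraMap ↥(IntermediateField.adjoin A {β}) L).injective]

include hβ in
lemma stepA (r : K) :
    Nat.card {ψ : ↥(IntermediateField.adjoin A {β}) →+* K // ψ (AdjoinSimple.gen A β) = r}
      = Nat.card {φ : A →+* K // ((minpoly A β).map φ).eval r = 0} := by
  have key : ∀ ψ : ↥(IntermediateField.adjoin A {β}) →+* K,
      ((minpoly A β).map (ψ.comp (algebraMap A _))).eval (ψ (AdjoinSimple.gen A β)) = 0 := by
    intro ψ
    rw [← Polynomial.map_map, Polynomial.eval_map, Polynomial.eval₂_at_apply]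
    have h0 : ((minpoly A β).map (algebraMap A ↥(IntermediateField.adjoin A {β}))).eval
        (AdjoinSimple.gen A β) = 0 := by
      rw [Polynomial.eval_map, ← Polynomial.aeval_def, ← minpoly_gen_eq (A := A) (β := β)]
      exact minpoly.aeval A _
    rw [h0, map_zero]
  refine Nat.card_congr (Equiv.ofBijective
    (fun ψ => ⟨ψ.1.comp (algebraMap A _), by have h := key ψ.1; rwa [ψ.2] at h⟩) ⟨?_, ?_⟩)
  · rintro ⟨ψ₁, h₁⟩ ⟨ψ₂, h₂⟩ h
    have hc := Subtype.ext_iff.1 h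
    simp only at hc
    exact Subtype.ext (ringHom_ext_gen hβ hc (h₁.trans h₂.symm))
  · rintro ⟨φ, hφ⟩
    letI : Algebra A K := φ.toAlgebra
    have hr : r ∈ (minpoly A β).aroots K := by
      rw [Polynomial.mem_aroots]
      exact ⟨minpoly.ne_zero hβ, by rwa [Polynomial.aeval_def, Polynomial.eval₂_eq_eval_map]⟩
    set Ψ := (IntermediateField.algHomAdjoinIntegralEquiv A hβ).symm ⟨r, hr⟩ with hΨ
    refine ⟨⟨Ψ.toRingHom, ?_⟩, ?_⟩
    · exact IntermediateField.algHomAdjoinIntegralEquiv_symm_apply_gen A hβ ⟨r, hr⟩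
    · refine Subtype.ext ?_
      ext a
      exact Ψ.commutes a

end Adjoin

section Main
variable (k : IntermediateField ℚ ℂ) [NumberField k] (β : ℂ)

lemma mem_adjoin_of_mem_Q {x : ℂ} (hx : x ∈ IntermediateField.adjoin ℚ ({β} : Set ℂ)) :
    x ∈ IntermediateField.adjoin (↥k) ({β} : Set ℂ) := by
  have h : IntermediateField.adjoin ℚ ({β} : Set ℂ)
      ≤ (IntermediateField.adjoin (↥k) ({β} : Set ℂ)).restrictScalars ℚ := by
    rw [IntermediateField.adjoin_le_iff]
    rintro y hy
    rw [Set.mem_singleton_iff] at hy; rw [hy]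
    show β ∈ (IntermediateField.adjoin (↥k) ({β} : Set ℂ)).restrictScalars ℚ
    rw [IntermediateField.mem_restrictScalars]
    exact IntermediateField.subset_adjoin _ _ rfl
  exact (IntermediateField.mem_restrictScalars ℚ).mp (h hx)

/-- The inclusion of `ℚ⟮β⟯` into `k⟮β⟯`. -/
noncomputable def incQE : ↥(IntermediateField.adjoin ℚ ({β} : Set ℂ)) →+*
    ↥(IntermediateField.adjoin (↥k) ({β} : Set ℂ)) where
  toFun x := ⟨x.1, mem_adjoin_of_mem_Q k β x.2⟩
  map_one' := rfl
  map_mul' _ _ := rfl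
  map_zero' := rfl
  map_add' _ _ := rfl

lemma incQE_gen : incQE k β (AdjoinSimple.gen ℚ β) = AdjoinSimple.gen (↥k) β :=
  Subtype.ext rfl

lemma stepB (hβQ : IsIntegral ℚ β) (hβk : IsIntegral (↥k) β) (r : ℂ) :
    (minpoly ℚ β).natDegree *
      Nat.card {ψ : ↥(IntermediateField.adjoin (↥k) ({β} : Set ℂ)) →+* ℂ //
        ψ (AdjoinSimple.gen (↥k) β) = r}
    = if ((minpoly ℚ β).map (algebraMap ℚ ℂ)).eval r = 0
        then finrank ℚ ↥(IntermediateField.adjoin (↥k) ({β} : Set ℂ)) else 0 := by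
  haveI hFDkE : FiniteDimensional (↥k) ↥(IntermediateField.adjoin (↥k) ({β} : Set ℂ)) :=
    IntermediateField.adjoin.finiteDimensional hβk
  haveI : IsScalarTower ℚ (↥k) ↥(IntermediateField.adjoin (↥k) ({β} : Set ℂ)) :=
    IsScalarTower.of_algebraMap_eq (fun q => RingHom.congr_fun (Subsingleton.elim
      (algebraMap ℚ ↥(IntermediateField.adjoin (↥k) ({β} : Set ℂ)))
      ((algebraMap (↥k) ↥(IntermediateField.adjoin (↥k) ({β} : Set ℂ))).comp
        (algebraMap ℚ (↥k)))) q)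
  haveI : FiniteDimensional ℚ ↥(IntermediateField.adjoin (↥k) ({β} : Set ℂ)) :=
    Module.Finite.trans (↥k) _
  by_cases hr : ((minpoly ℚ β).map (algebraMap ℚ ℂ)).eval r = 0
  · -- there is a hom `ρ : ℚ⟮β⟯ →+* ℂ` sending the generator to `r`
    have hrmem : r ∈ (minpoly ℚ β).aroots ℂ := by
      rw [Polynomial.mem_aroots]
      exact ⟨minpoly.ne_zero hβQ,
        by rwa [Polynomial.aeval_def, Polynomial.eval₂_eq_eval_map]⟩
    set ρ := ((IntermediateField.algHomAdjoinIntegralEquiv ℚ hβQ).symm ⟨r, hrmem⟩).toRingHom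
      with hρdef
    have hρ : ρ (AdjoinSimple.gen ℚ β) = r :=
      IntermediateField.algHomAdjoinIntegralEquiv_symm_apply_gen ℚ hβQ ⟨r, hrmem⟩
    letI : Algebra ↥(IntermediateField.adjoin ℚ ({β} : Set ℂ))
        ↥(IntermediateField.adjoin (↥k) ({β} : Set ℂ)) := (incQE k β).toAlgebra
    haveI : IsScalarTower ℚ ↥(IntermediateField.adjoin ℚ ({β} : Set ℂ))
        ↥(IntermediateField.adjoin (↥k) ({β} : Set ℂ)) :=
      IsScalarTower.of_algebraMap_eq (fun q => RingHom.congr_fun (Subsingleton.elim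
        (algebraMap ℚ ↥(IntermediateField.adjoin (↥k) ({β} : Set ℂ)))
        ((algebraMap ↥(IntermediateField.adjoin ℚ ({β} : Set ℂ))
            ↥(IntermediateField.adjoin (↥k) ({β} : Set ℂ))).comp
          (algebraMap ℚ ↥(IntermediateField.adjoin ℚ ({β} : Set ℂ))))) q)
    haveI : FiniteDimensional ↥(IntermediateField.adjoin ℚ ({β} : Set ℂ))
        ↥(IntermediateField.adjoin (↥k) ({β} : Set ℂ)) := FiniteDimensional.right ℚ _ _
    haveI : CharZero ↥(IntermediateField.adjoin ℚ ({β} : Set ℂ)) :=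
      charZero_of_injective_algebraMap (algebraMap ℚ _).injective
    have hequiv : {ψ : ↥(IntermediateField.adjoin (↥k) ({β} : Set ℂ)) →+* ℂ //
          ψ (AdjoinSimple.gen (↥k) β) = r}
        ≃ {ψ : ↥(IntermediateField.adjoin (↥k) ({β} : Set ℂ)) →+* ℂ //
          ψ.comp (algebraMap ↥(IntermediateField.adjoin ℚ ({β} : Set ℂ)) _) = ρ} := by
      refine Equiv.subtypeEquiv (Equiv.refl _) (fun ψ => ?_)
      constructor
      · intro h
        refine ringHom_ext_gen hβQ (Subsingleton.elim _ _) ?_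
        show ψ (incQE k β (AdjoinSimple.gen ℚ β)) = ρ (AdjoinSimple.gen ℚ β)
        rw [incQE_gen, hρ]
        exact h
      · intro h
        have h2 := RingHom.congr_fun h (AdjoinSimple.gen ℚ β)
        simp only [Equiv.refl_apply, RingHom.coe_comp, Function.comp_apply] at h2
        show ψ (AdjoinSimple.gen (↥k) β) = r
        rw [← incQE_gen k β]
        exact h2.trans hρ
    rw [if_pos hr, Nat.card_congr hequiv, card_fiber ρ, ← IntermediateField.adjoin.finrank hβQ]
    exact Module.finrank_mul_finrank ℚ _ _
  · haveI : IsEmpty {ψ : ↥(IntermediateField.adjoin (↥k) ({β} : Set ℂ)) →+* ℂ //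
        ψ (AdjoinSimple.gen (↥k) β) = r} := by
      refine ⟨fun ψ' => hr ?_⟩
      obtain ⟨ψ, hψ⟩ := ψ'
      haveI : IsScalarTower ℚ ↥(IntermediateField.adjoin (↥k) ({β} : Set ℂ)) ℂ :=
        IsScalarTower.of_algebraMap_eq (fun q => RingHom.congr_fun (Subsingleton.elim
          (algebraMap ℚ ℂ)
          ((algebraMap ↥(IntermediateField.adjoin (↥k) ({β} : Set ℂ)) ℂ).comp
            (algebraMap ℚ ↥(IntermediateField.adjoin (↥k) ({β} : Set ℂ))))) q)
      have h1 : ((minpoly ℚ β).map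
          (algebraMap ℚ ↥(IntermediateField.adjoin (↥k) ({β} : Set ℂ)))).eval
          (AdjoinSimple.gen (↥k) β) = 0 := by
        rw [Polynomial.eval_map, ← Polynomial.aeval_def]
        have : algebraMap ↥(IntermediateField.adjoin (↥k) ({β} : Set ℂ)) ℂ
            (AdjoinSimple.gen (↥k) β) = β := rfl
        have hmp : minpoly ℚ (AdjoinSimple.gen (↥k) β) = minpoly ℚ β := by
          conv_rhs => rw [← this]
          rw [minpoly.algebraMap_eq
            (algebraMap ↥(IntermediateField.adjoin (↥k) ({β} : Set ℂ)) ℂ).injective]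
        rw [← hmp]
        exact minpoly.aeval ℚ _
      have hcomp : algebraMap ℚ ℂ = (ψ.comp
          (algebraMap ℚ ↥(IntermediateField.adjoin (↥k) ({β} : Set ℂ)))) :=
        Subsingleton.elim _ _
      rw [hcomp, ← Polynomial.map_map, Polynomial.eval_map, ← hψ,
        Polynomial.eval₂_at_apply, h1, map_zero]
    rw [if_neg hr, Nat.card_of_isEmpty, mul_zero]

end Main
lemma mahlerMeasure_nonneg (f : Polynomial ℂ) : 0 ≤ _root_.mahlerMeasure f := by
  unfold _root_.mahlerMeasure
  refine mul_nonneg (norm_nonneg _) (Multiset.prod_nonneg fun a ha => ?_)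
  obtain ⟨z, _, rfl⟩ := Multiset.mem_map.1 ha
  exact le_trans zero_le_one (le_max_left _ _)

lemma mahlerMeasure_monic {f : Polynomial ℂ} (hf : f.Monic) :
    _root_.mahlerMeasure f = (f.roots.map fun z => max 1 ‖z‖).prod := by
  unfold _root_.mahlerMeasure
  rw [Polynomial.Monic.leadingCoeff hf, norm_one, one_mul]

lemma multiset_map_prod_sum {ι : Type*} (s : Finset ι) (f : ι → Multiset ℂ) (g : ℂ → ℝ) :
    ((∑ i ∈ s, f i).map g).prod = ∏ i ∈ s, ((f i).map g).prod := by
  classical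
  induction s using Finset.cons_induction with
  | empty => simp
  | cons a s ha ih =>
    simp [Finset.sum_insert ha, Finset.prod_insert ha, Multiset.map_add, Multiset.prod_add, ih]

section Key
variable (k : IntermediateField ℚ ℂ) [NumberField k] {β : ℂ}

lemma key_multiset (hβQ : IsIntegral ℚ β) (hβk : IsIntegral (↥k) β) :
    (minpoly ℚ β).natDegree • ∑ φ : ↥k →+* ℂ, ((minpoly (↥k) β).map φ).roots
      = finrank ℚ ↥(IntermediateField.adjoin (↥k) ({β} : Set ℂ)) •
          ((minpoly ℚ β).map (algebraMap ℚ ℂ)).roots := by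
  classical
  rw [Multiset.ext]
  intro r
  rw [Multiset.count_nsmul, Multiset.count_nsmul]
  have hc : Multiset.count r (∑ φ : ↥k →+* ℂ, ((minpoly (↥k) β).map φ).roots)
      = ∑ φ : ↥k →+* ℂ, Multiset.count r ((minpoly (↥k) β).map φ).roots :=
    map_sum (Multiset.countAddMonoidHom r) _ _
  have hone : ∀ φ : ↥k →+* ℂ, Multiset.count r ((minpoly (↥k) β).map φ).roots
      = if ((minpoly (↥k) β).map φ).eval r = 0 then 1 else 0 := by
    intro φ
    rw [Multiset.count_eq_of_nodup
      (Polynomial.nodup_roots ((minpoly.irreducible hβk).separable.map))]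
    have hne : (minpoly (↥k) β).map φ ≠ 0 := ((minpoly.monic hβk).map φ).ne_zero
    simp [Polynomial.mem_roots', hne, Polynomial.IsRoot.def]
  have hQone : Multiset.count r ((minpoly ℚ β).map (algebraMap ℚ ℂ)).roots
      = if ((minpoly ℚ β).map (algebraMap ℚ ℂ)).eval r = 0 then 1 else 0 := by
    rw [Multiset.count_eq_of_nodup
      (Polynomial.nodup_roots ((minpoly.irreducible hβQ).separable.map))]
    have hne : (minpoly ℚ β).map (algebraMap ℚ ℂ) ≠ 0 :=
      ((minpoly.monic hβQ).map (algebraMap ℚ ℂ)).ne_zero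
    simp [Polynomial.mem_roots', hne, Polynomial.IsRoot.def]
  rw [hc]
  simp only [hone]
  have hsum : (∑ φ : ↥k →+* ℂ, if ((minpoly (↥k) β).map φ).eval r = 0 then 1 else 0)
      = Nat.card {φ : ↥k →+* ℂ // ((minpoly (↥k) β).map φ).eval r = 0} := by
    rw [Nat.card_eq_fintype_card, Fintype.card_subtype]
    rw [Finset.card_filter]
  rw [hsum, ← stepA hβk r, hQone]
  have hB := stepB k β hβQ hβk r
  by_cases hr : ((minpoly ℚ β).map (algebraMap ℚ ℂ)).eval r = 0
  · rw [if_pos hr] at hB ⊢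
    rw [hB, mul_one]
  · rw [if_neg hr] at hB ⊢
    rw [hB, mul_zero]

lemma key_prod (hβQ : IsIntegral ℚ β) (hβk : IsIntegral (↥k) β) :
    (∏ φ : ↥k →+* ℂ, _root_.mahlerMeasure ((minpoly (↥k) β).map φ)) ^ (minpoly ℚ β).natDegree
      = _root_.mahlerMeasure ((minpoly ℚ β).map (algebraMap ℚ ℂ))
          ^ finrank ℚ ↥(IntermediateField.adjoin (↥k) ({β} : Set ℂ)) := by
  have h1 : ∀ φ : ↥k →+* ℂ, _root_.mahlerMeasure ((minpoly (↥k) β).map φ)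
      = (((minpoly (↥k) β).map φ).roots.map fun z => max 1 ‖z‖).prod :=
    fun φ => _root_.mahlerMeasure_monic ((minpoly.monic hβk).map φ)
  simp only [h1, _root_.mahlerMeasure_monic ((minpoly.monic hβQ).map (algebraMap ℚ ℂ))]
  rw [← multiset_map_prod_sum Finset.univ (fun φ : ↥k →+* ℂ => ((minpoly (↥k) β).map φ).roots)]
  rw [← Multiset.prod_nsmul, ← Multiset.prod_nsmul, ← Multiset.map_nsmul, ← Multiset.map_nsmul]
  rw [key_multiset k hβQ hβk]

end Key
lemma height_nonneg (α : ℂ) : 0 ≤ height α :=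
  Real.rpow_nonneg (_root_.mahlerMeasure_nonneg _) _

section Key2
variable (k : IntermediateField ℚ ℂ) [NumberField k] {β : ℂ}

lemma towerZ : IsScalarTower ℤ (↥k) ℂ :=
  IsScalarTower.of_algebraMap_eq (fun n => RingHom.congr_fun (Subsingleton.elim
    (algebraMap ℤ ℂ) ((algebraMap (↥k) ℂ).comp (algebraMap ℤ (↥k)))) n)

lemma Mk_minpoly (hβ : IsIntegral ℤ β) :
    Mk (↥k) (minpoly (↥k) β) = height β ^ (minpoly (↥k) β).natDegree := by
  classical
  haveI := towerZ k
  have hβQ : IsIntegral ℚ β := hβ.tower_top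
  have hβk : IsIntegral (↥k) β := hβ.tower_top
  haveI hFDkE : FiniteDimensional (↥k) ↥(IntermediateField.adjoin (↥k) ({β} : Set ℂ)) :=
    IntermediateField.adjoin.finiteDimensional hβk
  haveI : IsScalarTower ℚ (↥k) ↥(IntermediateField.adjoin (↥k) ({β} : Set ℂ)) :=
    IsScalarTower.of_algebraMap_eq (fun q => RingHom.congr_fun (Subsingleton.elim
      (algebraMap ℚ ↥(IntermediateField.adjoin (↥k) ({β} : Set ℂ)))
      ((algebraMap (↥k) ↥(IntermediateField.adjoin (↥k) ({β} : Set ℂ))).comp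
        (algebraMap ℚ (↥k)))) q)
  haveI : FiniteDimensional ℚ ↥(IntermediateField.adjoin (↥k) ({β} : Set ℂ)) :=
    Module.Finite.trans (↥k) _
  have hNme : finrank ℚ ↥(IntermediateField.adjoin (↥k) ({β} : Set ℂ))
      = finrank ℚ (↥k) * (minpoly (↥k) β).natDegree := by
    rw [← IntermediateField.adjoin.finrank hβk]
    exact (Module.finrank_mul_finrank ℚ (↥k) _).symm
  have hd0 : ((minpoly ℚ β).natDegree : ℝ) ≠ 0 := by
    exact_mod_cast (minpoly.natDegree_pos hβQ).ne'
  have hm0 : ((finrank ℚ (↥k)) : ℝ) ≠ 0 := by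
    exact_mod_cast (Module.finrank_pos : 0 < finrank ℚ (↥k)).ne'
  have hfrac : minpoly ℚ β = (minpoly ℤ β).map (algebraMap ℤ ℚ) :=
    minpoly.isIntegrallyClosed_eq_field_fractions' ℚ hβ
  have hdeg : (minpoly ℤ β).natDegree = (minpoly ℚ β).natDegree := by
    rw [hfrac, (minpoly.monic hβ).natDegree_map]
  have hmap : (minpoly ℤ β).map (Int.castRingHom ℂ) = (minpoly ℚ β).map (algebraMap ℚ ℂ) := by
    rw [hfrac, Polynomial.map_map]
    congr 1
  have hM0 : 0 ≤ _root_.mahlerMeasure ((minpoly ℚ β).map (algebraMap ℚ ℂ)) := _root_.mahlerMeasure_nonneg _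
  have hX0 : 0 ≤ ∏ φ : ↥k →+* ℂ, _root_.mahlerMeasure ((minpoly (↥k) β).map φ) :=
    Finset.prod_nonneg fun i _ => _root_.mahlerMeasure_nonneg _
  have hpow := key_prod k hβQ hβk
  have hheight : height β
      = _root_.mahlerMeasure ((minpoly ℚ β).map (algebraMap ℚ ℂ))
          ^ ((1:ℝ) / (minpoly ℚ β).natDegree) := by
    unfold height
    rw [hmap, hdeg]
  have hMk : Mk (↥k) (minpoly (↥k) β)
      = (∏ φ : ↥k →+* ℂ, _root_.mahlerMeasure ((minpoly (↥k) β).map φ))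
          ^ ((1:ℝ) / (finrank ℚ (↥k))) := by
    unfold Mk
    rw [finprod_eq_prod_of_fintype]
    rw [Real.finset_prod_rpow _ _ (fun i _ => _root_.mahlerMeasure_nonneg _) _]
  rw [hMk, hheight]
  have hXM : (∏ φ : ↥k →+* ℂ, _root_.mahlerMeasure ((minpoly (↥k) β).map φ))
      = _root_.mahlerMeasure ((minpoly ℚ β).map (algebraMap ℚ ℂ))
          ^ ((finrank ℚ ↥(IntermediateField.adjoin (↥k) ({β} : Set ℂ)) : ℝ)
              * ((minpoly ℚ β).natDegree : ℝ)⁻¹) := by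
    calc (∏ φ : ↥k →+* ℂ, _root_.mahlerMeasure ((minpoly (↥k) β).map φ))
        = ((∏ φ : ↥k →+* ℂ, _root_.mahlerMeasure ((minpoly (↥k) β).map φ))
            ^ ((minpoly ℚ β).natDegree : ℝ)) ^ (((minpoly ℚ β).natDegree : ℝ))⁻¹ := by
          rw [← Real.rpow_mul hX0, mul_inv_cancel₀ hd0, Real.rpow_one]
      _ = ((∏ φ : ↥k →+* ℂ, _root_.mahlerMeasure ((minpoly (↥k) β).map φ))
            ^ ((minpoly ℚ β).natDegree : ℕ)) ^ (((minpoly ℚ β).natDegree : ℝ))⁻¹ := by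
          rw [Real.rpow_natCast]
      _ = (_root_.mahlerMeasure ((minpoly ℚ β).map (algebraMap ℚ ℂ))
            ^ (finrank ℚ ↥(IntermediateField.adjoin (↥k) ({β} : Set ℂ)) : ℕ))
              ^ (((minpoly ℚ β).natDegree : ℝ))⁻¹ := by rw [hpow]
      _ = (_root_.mahlerMeasure ((minpoly ℚ β).map (algebraMap ℚ ℂ))
            ^ (finrank ℚ ↥(IntermediateField.adjoin (↥k) ({β} : Set ℂ)) : ℝ))
              ^ (((minpoly ℚ β).natDegree : ℝ))⁻¹ := by rw [Real.rpow_natCast]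
      _ = _ := by rw [← Real.rpow_mul hM0]
  rw [hXM, ← Real.rpow_mul hM0, ← Real.rpow_natCast (_root_.mahlerMeasure ((minpoly ℚ β).map
    (algebraMap ℚ ℂ)) ^ ((1:ℝ) / (minpoly ℚ β).natDegree)) ((minpoly (↥k) β).natDegree),
    ← Real.rpow_mul hM0]
  congr 1
  rw [hNme]
  push_cast
  field_simp

lemma coeff_int (hβ : IsIntegral ℤ β) (i : ℕ) :
    IsIntegral ℤ ((minpoly (↥k) β).coeff i) := by
  classical
  haveI := towerZ k
  have hβQ : IsIntegral ℚ β := hβ.tower_top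
  have hβk : IsIntegral (↥k) β := hβ.tower_top
  set q := (minpoly (↥k) β).map (algebraMap (↥k) ℂ) with hq
  have hqm : q.Monic := (minpoly.monic hβk).map _
  have hdvd : q ∣ (minpoly ℚ β).map (algebraMap ℚ ℂ) := by
    have h1 : minpoly (↥k) β ∣ (minpoly ℚ β).map (algebraMap ℚ (↥k)) :=
      minpoly.dvd (↥k) β (by rw [Polynomial.aeval_map_algebraMap]; exact minpoly.aeval ℚ β)
    have h2 := Polynomial.map_dvd (algebraMap (↥k) ℂ) h1
    rwa [Polynomial.map_map, ← IsScalarTower.algebraMap_eq] at h2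
  have hroots : ∀ r ∈ q.roots, IsIntegral ℤ r := by
    intro r hr
    have hmem : r ∈ ((minpoly ℚ β).map (algebraMap ℚ ℂ)).roots :=
      Multiset.mem_of_le (Polynomial.roots.le_of_dvd
        (((minpoly.monic hβQ).map _).ne_zero) hdvd) hr
    have hev : ((minpoly ℚ β).map (algebraMap ℚ ℂ)).eval r = 0 :=
      (Polynomial.mem_roots'.1 hmem).2
    refine ⟨minpoly ℤ β, minpoly.monic hβ, ?_⟩
    rw [Polynomial.eval₂_eq_eval_map]
    have hmap2 : (minpoly ℤ β).map (algebraMap ℤ ℂ) = (minpoly ℚ β).map (algebraMap ℚ ℂ) := by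
      rw [minpoly.isIntegrallyClosed_eq_field_fractions' ℚ hβ, Polynomial.map_map]
      congr 1
    rw [hmap2]
    exact hev
  have hsplit : q = (q.roots.map fun r => Polynomial.X - Polynomial.C r).prod :=
    (IsAlgClosed.splits q).eq_prod_roots_of_monic hqm
  have hlift : q ∈ Polynomial.lifts (algebraMap (integralClosure ℤ ℂ) ℂ) := by
    rw [Polynomial.lifts_iff_liftsRing, hsplit]
    refine Subring.multiset_prod_mem _ _ (fun t ht => ?_)
    obtain ⟨r, hr, rfl⟩ := Multiset.mem_map.1 ht
    refine Subring.sub_mem _ ?_ ?_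
    · rw [← Polynomial.lifts_iff_liftsRing]
      exact Polynomial.X_mem_lifts _
    · rw [← Polynomial.lifts_iff_liftsRing]
      exact Polynomial.C_mem_lifts (algebraMap (integralClosure ℤ ℂ) ℂ) ⟨r, hroots r hr⟩
  obtain ⟨y, hy⟩ := (Polynomial.lifts_iff_coeff_lifts q).1 hlift i
  have hyint : IsIntegral ℤ (q.coeff i) := hy ▸ y.2
  have hcm : q.coeff i = algebraMap (↥k) ℂ ((minpoly (↥k) β).coeff i) :=
    Polynomial.coeff_map _ _
  rw [hcm] at hyint
  exact (isIntegral_algebraMap_iff (algebraMap (↥k) ℂ).injective).1 hyint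

lemma int_of_coeffs (f : Polynomial (↥k)) (hm : f.Monic)
    (hc : ∀ i, IsIntegral ℤ (f.coeff i)) (hroot : Polynomial.aeval β f = 0) :
    IsIntegral ℤ β := by
  classical
  haveI := towerZ k
  set q := f.map (algebraMap (↥k) ℂ) with hqdef
  have hqm : q.Monic := hm.map _
  have hev : q.eval β = 0 := by
    rw [hqdef, Polynomial.eval_map, ← Polynomial.aeval_def]
    exact hroot
  have hlift : q ∈ Polynomial.lifts (algebraMap (integralClosure ℤ ℂ) ℂ) := by
    rw [Polynomial.lifts_iff_coeff_lifts]
    intro n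
    refine ⟨⟨algebraMap (↥k) ℂ (f.coeff n),
      (isIntegral_algebraMap_iff (algebraMap (↥k) ℂ).injective).2 (hc n)⟩, ?_⟩
    show algebraMap (integralClosure ℤ ℂ) ℂ _ = q.coeff n
    rw [hqdef, Polynomial.coeff_map]
    rfl
  obtain ⟨q', hq'map, _, hq'm⟩ := Polynomial.lifts_and_degree_eq_and_monic hlift hqm
  have hint : IsIntegral (integralClosure ℤ ℂ) β :=
    ⟨q', hq'm, by rw [Polynomial.eval₂_eq_eval_map, hq'map]; exact hev⟩
  exact isIntegral_trans β hint

end Key2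


/-- An algebraic integer `β` has degree `e` over the number field `k` and `H(β) ≤ 𝓗` if and
only if `β` is a root of a monic irreducible polynomial `f ∈ O_k[X]` of degree `e` with
`M^k(f) ≤ 𝓗^e`. -/
theorem isIntegral_degree_height_iff (k : IntermediateField ℚ ℂ) [NumberField k]
    (e : ℕ) (he : 1 ≤ e) (β : ℂ) (𝓗 : ℝ) (h𝓗 : 0 < 𝓗) :
    (IsIntegral ℤ β ∧
        Module.finrank k (IntermediateField.adjoin k ({β} : Set ℂ)) = e ∧
        height β ≤ 𝓗) ↔
      ∃ f : Polynomial k, f.Monic ∧ Irreducible f ∧ (∀ i, IsIntegral ℤ (f.coeff i)) ∧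
        f.natDegree = e ∧ Polynomial.aeval β f = 0 ∧ Mk k f ≤ 𝓗 ^ e := by
  haveI := towerZ k
  constructor
  · rintro ⟨hint, hdeg, hH⟩
    have hβk : IsIntegral (↥k) β := hint.tower_top
    have hnd : (minpoly (↥k) β).natDegree = e := by
      rw [← hdeg, IntermediateField.adjoin.finrank hβk]
    refine ⟨minpoly (↥k) β, minpoly.monic hβk, minpoly.irreducible hβk,
      fun i => coeff_int k hint i, hnd, minpoly.aeval _ _, ?_⟩
    rw [Mk_minpoly k hint, hnd]
    exact pow_le_pow_left₀ (height_nonneg β) hH e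
  · rintro ⟨f, hmono, hirr, hcoeff, hdegf, hroot, hMk⟩
    have hint : IsIntegral ℤ β := int_of_coeffs k f hmono hcoeff hroot
    have hβk : IsIntegral (↥k) β := hint.tower_top
    have hf : f = minpoly (↥k) β := minpoly.eq_of_irreducible_of_monic hirr hroot hmono
    refine ⟨hint, ?_, ?_⟩
    · rw [IntermediateField.adjoin.finrank hβk, ← hf, hdegf]
    · rw [hf, Mk_minpoly k hint, ← hf, hdegf] at hMk
      exact le_of_pow_le_pow_left₀ (by omega) h𝓗.le hMk
end

section
/- For each 𝓗 > 0, the set of monic polynomials f ∈ O_k[X] of degree e with M^k(f) ≤ 𝓗 is finite. -/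
open Polynomial

lemma aux_one_le_prodMax (s : Multiset ℂ) : 1 ≤ (s.map fun z => max 1 ‖z‖).prod := by
  refine Multiset.one_le_prod ?_
  intro x hx
  obtain ⟨z, _, rfl⟩ := Multiset.mem_map.1 hx
  exact le_max_left _ _

lemma aux_prodMax_nonneg (s : Multiset ℂ) : 0 ≤ (s.map fun z => max 1 ‖z‖).prod :=
  le_trans zero_le_one (aux_one_le_prodMax s)

lemma aux_norm_prod_le (t : Multiset ℂ) : ‖t.prod‖ ≤ (t.map fun z => max 1 ‖z‖).prod := by
  induction t using Multiset.induction with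
  | empty => simp
  | cons a t ih =>
    simp only [Multiset.prod_cons, Multiset.map_cons, norm_mul]
    exact mul_le_mul (le_max_right _ _) ih (norm_nonneg _)
      (le_trans (norm_nonneg a) (le_max_right _ _))

lemma aux_prodMax_mono {t s : Multiset ℂ} (h : t ≤ s) :
    (t.map fun z => max 1 ‖z‖).prod ≤ (s.map fun z => max 1 ‖z‖).prod := by
  obtain ⟨u, rfl⟩ := Multiset.le_iff_exists_add.1 h
  rw [Multiset.map_add, Multiset.prod_add]
  exact le_mul_of_one_le_right (aux_prodMax_nonneg t) (aux_one_le_prodMax u)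

lemma aux_norm_esymm_le (s : Multiset ℂ) (r : ℕ) :
    ‖s.esymm r‖ ≤ 2 ^ Multiset.card s * (s.map fun z => max 1 ‖z‖).prod := by
  rw [Multiset.esymm]
  refine le_trans (norm_multiset_sum_le _) ?_
  have h1 : ∀ x ∈ ((s.powersetCard r).map Multiset.prod).map (fun z : ℂ => ‖z‖),
      x ≤ (s.map fun z => max 1 ‖z‖).prod := by
    intro x hx
    simp only [Multiset.map_map, Multiset.mem_map, Function.comp] at hx
    obtain ⟨t, ht, rfl⟩ := hx
    exact le_trans (aux_norm_prod_le t) (aux_prodMax_mono (Multiset.mem_powersetCard.1 ht).1)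
  calc (((s.powersetCard r).map Multiset.prod).map (fun z : ℂ => ‖z‖)).sum
      ≤ Multiset.card (((s.powersetCard r).map Multiset.prod).map (fun z : ℂ => ‖z‖)) •
          (s.map fun z => max 1 ‖z‖).prod := Multiset.sum_le_card_nsmul _ _ h1
    _ = ((Multiset.card s).choose r : ℝ) * (s.map fun z => max 1 ‖z‖).prod := by
        simp [Multiset.card_powersetCard, nsmul_eq_mul]
    _ ≤ 2 ^ Multiset.card s * (s.map fun z => max 1 ‖z‖).prod := by
        refine mul_le_mul_of_nonneg_right ?_ (aux_prodMax_nonneg s)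
        have : (Multiset.card s).choose r ≤ 2 ^ Multiset.card s := by
          rcases le_or_gt r (Multiset.card s) with h | h
          · calc (Multiset.card s).choose r
                ≤ ∑ i ∈ Finset.range (Multiset.card s + 1), (Multiset.card s).choose i :=
                  Finset.single_le_sum (fun i _ => Nat.zero_le _)
                    (Finset.mem_range.2 (Nat.lt_succ_of_le h))
              _ = 2 ^ Multiset.card s := Nat.sum_range_choose _
          · simp [Nat.choose_eq_zero_of_lt h]
        exact_mod_cast Nat.cast_le.2 this

lemma aux_one_le_mahler {p : ℂ[X]} (hp : p.Monic) : 1 ≤ _root_.mahlerMeasure p := by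
  rw [_root_.mahlerMeasure, hp.leadingCoeff, norm_one, one_mul]
  exact aux_one_le_prodMax _

lemma aux_coeff_le {p : ℂ[X]} (hp : p.Monic) (i : ℕ) :
    ‖p.coeff i‖ ≤ 2 ^ p.natDegree * _root_.mahlerMeasure p := by
  have hs : p.Splits := IsAlgClosed.splits p
  have hcard : Multiset.card p.roots = p.natDegree :=
    (Polynomial.splits_iff_card_roots).1 hs
  have hMM : _root_.mahlerMeasure p = (p.roots.map fun z => max 1 ‖z‖).prod := by
    rw [_root_.mahlerMeasure, hp.leadingCoeff, norm_one, one_mul]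
  rcases le_or_gt i p.natDegree with h | h
  · have hi : i ≤ Multiset.card p.roots := hcard ▸ h
    have heq := hs.eq_prod_roots_of_monic hp
    have : p.coeff i = (-1) ^ (Multiset.card p.roots - i) *
        p.roots.esymm (Multiset.card p.roots - i) := by
      conv_lhs => rw [heq]
      exact Multiset.prod_X_sub_C_coeff p.roots hi
    rw [this, norm_mul, norm_pow, norm_neg, norm_one, one_pow, one_mul, hMM]
    calc ‖p.roots.esymm (Multiset.card p.roots - i)‖
        ≤ 2 ^ Multiset.card p.roots * (p.roots.map fun z => max 1 ‖z‖).prod :=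
          aux_norm_esymm_le _ _
      _ = 2 ^ p.natDegree * (p.roots.map fun z => max 1 ‖z‖).prod := by rw [hcard]
  · rw [Polynomial.coeff_eq_zero_of_natDegree_lt h, norm_zero]
    have := aux_one_le_mahler hp
    positivity

/-- For each `𝓗 > 0`, the set of monic polynomials `f ∈ O_k[X]` of degree `e` with
`M^k(f) ≤ 𝓗` is finite. -/
theorem finite_monic_polys (k : IntermediateField ℚ ℂ) [NumberField k] (e : ℕ)
    (𝓗 : ℝ) (h𝓗 : 0 < 𝓗) :
    {f : Polynomial k | f.Monic ∧ (∀ i, IsIntegral ℤ (f.coeff i)) ∧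
      f.natDegree = e ∧ Mk k f ≤ 𝓗}.Finite := by
  classical
  set m := Module.finrank ℚ k with hm
  have hm0 : 0 < m := Module.finrank_pos
  set B : ℝ := 2 ^ e * 𝓗 ^ m with hB
  have hB0 : 0 ≤ B := by positivity
  set S : Set k := {x : k | IsIntegral ℤ x ∧ ∀ φ : k →+* ℂ, ‖φ x‖ ≤ B} with hSdef
  have hS : S.Finite := NumberField.Embeddings.finite_of_norm_le k ℂ B
  set T : Set (Polynomial k) := {f : Polynomial k | f.Monic ∧ (∀ i, IsIntegral ℤ (f.coeff i)) ∧
      f.natDegree = e ∧ Mk k f ≤ 𝓗} with hT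
  -- each embedding gives a Mahler measure bound
  have hMbound : ∀ f ∈ T, ∀ φ : k →+* ℂ, _root_.mahlerMeasure (f.map φ) ≤ 𝓗 ^ m := by
    intro f hf φ
    obtain ⟨hmon, _, _, hMk⟩ := hf
    have hone : ∀ ψ : k →+* ℂ, 1 ≤ _root_.mahlerMeasure (f.map ψ) ^ ((1 : ℝ) / m) := fun ψ =>
      Real.one_le_rpow (aux_one_le_mahler (hmon.map ψ)) (by positivity)
    have hMk' : (∏ φ : k →+* ℂ, _root_.mahlerMeasure (f.map φ) ^ ((1 : ℝ) / m)) ≤ 𝓗 := by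
      rw [Mk, finprod_eq_prod_of_fintype] at hMk
      exact hMk
    have hfac : _root_.mahlerMeasure (f.map φ) ^ ((1 : ℝ) / m) ≤ 𝓗 := by
      refine le_trans ?_ hMk'
      rw [← Finset.mul_prod_erase Finset.univ
        (fun ψ : k →+* ℂ => _root_.mahlerMeasure (f.map ψ) ^ ((1 : ℝ) / m)) (Finset.mem_univ φ)]
      refine le_mul_of_one_le_right (le_trans zero_le_one (hone φ)) ?_
      calc (1 : ℝ) = ∏ _ψ ∈ Finset.univ.erase φ, (1 : ℝ) := by simp
        _ ≤ ∏ ψ ∈ Finset.univ.erase φ, _root_.mahlerMeasure (f.map ψ) ^ ((1 : ℝ) / m) :=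
            Finset.prod_le_prod (fun i _ => zero_le_one) (fun i _ => hone i)
    have hMnn : (0 : ℝ) ≤ _root_.mahlerMeasure (f.map φ) :=
      le_trans zero_le_one (aux_one_le_mahler (hmon.map φ))
    have hkey : _root_.mahlerMeasure (f.map φ) =
        (_root_.mahlerMeasure (f.map φ) ^ ((1 : ℝ) / m)) ^ (m : ℕ) := by
      rw [← Real.rpow_natCast (_root_.mahlerMeasure (f.map φ) ^ ((1 : ℝ) / m)) m,
        ← Real.rpow_mul hMnn, one_div, inv_mul_cancel₀ (by exact_mod_cast hm0.ne'),
        Real.rpow_one]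
    rw [hkey]
    exact pow_le_pow_left₀ (Real.rpow_nonneg hMnn _) hfac m
  -- hence coefficients lie in the finite set S
  have hcoeff : ∀ f ∈ T, ∀ i, f.coeff i ∈ S := by
    intro f hf i
    obtain ⟨hmon, hint, hdeg, -⟩ := id hf
    refine ⟨hint i, fun φ => ?_⟩
    have h1 : ‖(f.map φ).coeff i‖ ≤ 2 ^ (f.map φ).natDegree * _root_.mahlerMeasure (f.map φ) :=
      aux_coeff_le (hmon.map φ) i
    rw [Polynomial.coeff_map] at h1
    have h2 : (f.map φ).natDegree = e := by
      rw [Polynomial.natDegree_map, hdeg]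
    rw [h2] at h1
    refine le_trans h1 ?_
    rw [hB]
    exact mul_le_mul_of_nonneg_left (hMbound f hf φ) (by positivity)
  -- inject T into functions `Fin (e+1) → S`
  have himg : (fun f : Polynomial k => fun i : Fin (e + 1) => f.coeff i) '' T ⊆
      Set.univ.pi fun _ : Fin (e + 1) => S := by
    rintro g ⟨f, hf, rfl⟩ i _
    exact hcoeff f hf i
  refine Set.Finite.of_finite_image (f := fun f : Polynomial k =>
      fun i : Fin (e + 1) => f.coeff i) (Set.Finite.subset (Set.Finite.pi fun _ => hS) himg) ?_
  intro f hf g hg hfg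
  obtain ⟨_, _, hdf, _⟩ := hf
  obtain ⟨_, _, hdg, _⟩ := hg
  ext n
  rcases le_or_gt n e with h | h
  · have := congrFun hfg ⟨n, Nat.lt_succ_of_le h⟩
    simpa using this
  · rw [Polynomial.coeff_eq_zero_of_natDegree_lt (hdf ▸ h),
      Polynomial.coeff_eq_zero_of_natDegree_lt (hdg ▸ h)]
end

section
/- The Mahler measure M: ℂ^{n+1} → [0,∞), (z_0,…,z_n) ↦ M(z_0 X^n + ⋯ + z_n), is continuous. -/
open Polynomial

namespace MahlerAux

lemma prod_max_nonneg (s : Multiset ℂ) : 0 ≤ (s.map fun z => max 1 ‖z‖).prod := by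
  induction s using Multiset.induction with
  | empty => simp
  | cons a s ih =>
    simp only [Multiset.map_cons, Multiset.prod_cons]
    exact mul_nonneg (le_trans zero_le_one (le_max_left _ _)) ih

lemma one_le_prod_max (s : Multiset ℂ) : 1 ≤ (s.map fun z => max 1 ‖z‖).prod := by
  induction s using Multiset.induction with
  | empty => simp
  | cons a s ih =>
    simp only [Multiset.map_cons, Multiset.prod_cons]
    calc (1:ℝ) = 1 * 1 := by ring
    _ ≤ _ := mul_le_mul (le_max_left _ _) ih zero_le_one (le_trans zero_le_one (le_max_left _ _))

lemma mahlerMeasure_nonneg (f : Polynomial ℂ) : 0 ≤ _root_.mahlerMeasure f :=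
  mul_nonneg (norm_nonneg _) (prod_max_nonneg _)

/-- squared l² norm of the coefficients -/
noncomputable def l2sq (f : Polynomial ℂ) : ℝ := ∑' j : ℕ, ‖f.coeff j‖ ^ 2

lemma summable_coeff_sq (f : Polynomial ℂ) : Summable (fun j => ‖f.coeff j‖ ^ 2) := by
  apply summable_of_ne_finset_zero (s := Finset.range (f.natDegree + 1))
  intro j hj
  rw [Finset.mem_range, not_lt] at hj
  rw [f.coeff_eq_zero_of_natDegree_lt (by omega), norm_zero]
  ring

lemma l2sq_eq_sum_range {f : Polynomial ℂ} {N : ℕ} (h : f.natDegree < N) :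
    l2sq f = ∑ j ∈ Finset.range N, ‖f.coeff j‖ ^ 2 := by
  apply tsum_eq_sum
  intro j hj
  rw [Finset.mem_range, not_lt] at hj
  rw [f.coeff_eq_zero_of_natDegree_lt (by omega), norm_zero]
  ring

lemma l2sq_nonneg (f : Polynomial ℂ) : 0 ≤ l2sq f :=
  tsum_nonneg fun j => by positivity

lemma sq_coeff_le_l2sq (f : Polynomial ℂ) (j : ℕ) : ‖f.coeff j‖ ^ 2 ≤ l2sq f :=
  Summable.le_tsum (summable_coeff_sq f) j fun k _ => by positivity

lemma key_ident (α a b : ℂ) :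
    ‖a - α * b‖ ^ 2 - ‖(starRingEnd ℂ) α * a - b‖ ^ 2
      = (1 - ‖α‖ ^ 2) * (‖a‖ ^ 2 - ‖b‖ ^ 2) := by
  have h : ∀ z : ℂ, ‖z‖ ^ 2 = Complex.normSq z := by
    intro z; rw [← Complex.sq_norm]
  simp only [h]
  simp only [Complex.normSq_apply, Complex.sub_re, Complex.sub_im, Complex.mul_re,
    Complex.mul_im, Complex.conj_re, Complex.conj_im]
  ring

lemma shift_sum (g : Polynomial ℂ) {N : ℕ} (h : g.natDegree + 2 ≤ N) :
    ∑ j ∈ Finset.range N, ‖(X * g).coeff j‖ ^ 2 = ∑ j ∈ Finset.range N, ‖g.coeff j‖ ^ 2 := by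
  obtain ⟨M, rfl⟩ : ∃ M, N = M + 1 := ⟨N - 1, by omega⟩
  have h0 : (X * g).coeff 0 = 0 := by
    rw [mul_coeff_zero, coeff_X_zero, zero_mul]
  have hM : g.coeff M = 0 := g.coeff_eq_zero_of_natDegree_lt (by omega)
  have e1 : ∑ j ∈ Finset.range (M + 1), ‖(X * g).coeff j‖ ^ 2
      = (∑ j ∈ Finset.range M, ‖(X * g).coeff (j + 1)‖ ^ 2) + ‖(X * g).coeff 0‖ ^ 2 :=
    Finset.sum_range_succ' (fun j => ‖(X * g).coeff j‖ ^ 2) M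
  have e2 : ∑ j ∈ Finset.range (M + 1), ‖g.coeff j‖ ^ 2
      = (∑ j ∈ Finset.range M, ‖g.coeff j‖ ^ 2) + ‖g.coeff M‖ ^ 2 :=
    Finset.sum_range_succ (fun j => ‖g.coeff j‖ ^ 2) M
  rw [e1, e2, h0, hM]
  simp only [coeff_X_mul, norm_zero]

lemma l2sq_swap_aux (α : ℂ) (g : Polynomial ℂ) {N : ℕ}
    (h1 : ((C ((starRingEnd ℂ) α) * X - 1) * g).natDegree < N)
    (h2 : ((X - C α) * g).natDegree < N)
    (h3 : g.natDegree + 2 ≤ N) :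
    l2sq ((C ((starRingEnd ℂ) α) * X - 1) * g) = l2sq ((X - C α) * g) := by
  rw [l2sq_eq_sum_range h1, l2sq_eq_sum_range h2]
  have c1 : ∀ j, ((X - C α) * g).coeff j = (X * g).coeff j - α * g.coeff j := by
    intro j; rw [sub_mul, coeff_sub, coeff_C_mul]
  have c2 : ∀ j, ((C ((starRingEnd ℂ) α) * X - 1) * g).coeff j
      = (starRingEnd ℂ) α * (X * g).coeff j - g.coeff j := by
    intro j; rw [sub_mul, coeff_sub, one_mul, mul_assoc, coeff_C_mul]
  have expand : ∀ j : ℕ, ‖((X - C α) * g).coeff j‖ ^ 2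
      - ‖((C ((starRingEnd ℂ) α) * X - 1) * g).coeff j‖ ^ 2
      = (1 - ‖α‖ ^ 2) * (‖(X * g).coeff j‖ ^ 2 - ‖g.coeff j‖ ^ 2) := by
    intro j; rw [c1 j, c2 j, key_ident]
  have hsum : ∑ j ∈ Finset.range N, (‖((X - C α) * g).coeff j‖ ^ 2
      - ‖((C ((starRingEnd ℂ) α) * X - 1) * g).coeff j‖ ^ 2) = 0 := by
    have e1 := Finset.sum_congr rfl (fun j (_ : j ∈ Finset.range N) => expand j)
    rw [e1, ← Finset.mul_sum, Finset.sum_sub_distrib, shift_sum g h3, sub_self, mul_zero]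
  rw [Finset.sum_sub_distrib] at hsum
  linarith

/-- the single factor swap: replacing `X - α` by `conj α * X - 1` preserves the l² norm. -/
lemma l2sq_swap (α : ℂ) (g : Polynomial ℂ) :
    l2sq ((C ((starRingEnd ℂ) α) * X - 1) * g) = l2sq ((X - C α) * g) :=
  l2sq_swap_aux α g
    (N := ((C ((starRingEnd ℂ) α) * X - 1) * g).natDegree + ((X - C α) * g).natDegree
      + g.natDegree + 2) (by omega) (by omega) (by omega)

lemma l2sq_prod_swap (s : Multiset ℂ) (g : Polynomial ℂ) :
    l2sq ((s.map fun α => C ((starRingEnd ℂ) α) * X - 1).prod * g)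
      = l2sq ((s.map fun α => X - C α).prod * g) := by
  induction s using Multiset.induction generalizing g with
  | empty => simp
  | cons a s ih =>
    simp only [Multiset.map_cons, Multiset.prod_cons]
    rw [mul_assoc, l2sq_swap a, mul_left_comm, ih ((X - C a) * g), mul_left_comm, mul_assoc]


lemma card_roots_complex (f : Polynomial ℂ) : Multiset.card f.roots = f.natDegree := by
  exact IsAlgClosed.card_roots_eq_natDegree

lemma f_eq_prod (f : Polynomial ℂ) :
    C f.leadingCoeff * (f.roots.map fun α => X - C α).prod = f :=
  C_leadingCoeff_mul_prod_multiset_X_sub_C (card_roots_complex f)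

lemma mahler_eq_filter (f : Polynomial ℂ) :
    _root_.mahlerMeasure f = ‖f.leadingCoeff‖
      * ((f.roots.filter fun α => 1 < ‖α‖).map fun α => ‖α‖).prod := by
  unfold _root_.mahlerMeasure
  congr 1
  conv_lhs => rw [← Multiset.filter_add_not (fun α => 1 < ‖α‖) f.roots]
  rw [Multiset.map_add, Multiset.prod_add]
  have h1 : ((f.roots.filter fun α => 1 < ‖α‖).map fun z => max 1 ‖z‖).prod
      = ((f.roots.filter fun α => 1 < ‖α‖).map fun α => ‖α‖).prod := by
    congr 1
    refine Multiset.map_congr rfl fun x hx => ?_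
    have hx1 : 1 < ‖x‖ := (Multiset.mem_filter.mp hx).2
    exact max_eq_right (le_of_lt hx1)
  have h2 : ((f.roots.filter fun α => ¬ 1 < ‖α‖).map fun z => max 1 ‖z‖).prod = 1 := by
    apply Multiset.prod_eq_one
    intro x hx
    obtain ⟨a, ha, rfl⟩ := Multiset.mem_map.mp hx
    have ha1 : ¬ 1 < ‖a‖ := (Multiset.mem_filter.mp ha).2
    exact max_eq_left (not_lt.mp ha1)
  rw [h1, h2, mul_one]

lemma norm_mprod (s : Multiset ℂ) : ‖s.prod‖ = (s.map fun z => ‖z‖).prod := by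
  induction s using Multiset.induction with
  | empty => simp
  | cons a s ih => simp [norm_mul, ih]

lemma prod_map_norm_le_prod_max {t R : Multiset ℂ} (h : t ≤ R) :
    (t.map fun z => ‖z‖).prod ≤ (R.map fun z => max 1 ‖z‖).prod := by
  have step1 : ∀ s : Multiset ℂ, (s.map fun z => ‖z‖).prod ≤ (s.map fun z => max 1 ‖z‖).prod := by
    intro s
    induction s using Multiset.induction with
    | empty => simp
    | cons a s ih =>
      simp only [Multiset.map_cons, Multiset.prod_cons]
      refine mul_le_mul (le_max_right _ _) ih ?_ ?_
      · rw [← norm_mprod]; exact norm_nonneg _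
      · exact le_trans zero_le_one (le_max_left _ _)
  obtain ⟨u, rfl⟩ := Multiset.le_iff_exists_add.mp h
  refine le_trans (step1 t) ?_
  rw [Multiset.map_add, Multiset.prod_add]
  exact le_mul_of_one_le_right (prod_max_nonneg t) (one_le_prod_max u)

lemma norm_esymm_le (R : Multiset ℂ) (m : ℕ) (hm : m ≤ Multiset.card R) :
    ‖R.esymm m‖ ≤ (2 : ℝ) ^ (Multiset.card R) * (R.map fun z => max 1 ‖z‖).prod := by
  set P := (R.map fun z => max 1 ‖z‖).prod with hP
  have hbound : ∀ x ∈ (R.powersetCard m).map Multiset.prod, ‖x‖ ≤ P := by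
    intro x hx
    obtain ⟨t, ht, rfl⟩ := Multiset.mem_map.mp hx
    rw [norm_mprod]
    exact prod_map_norm_le_prod_max (Multiset.mem_powersetCard.mp ht).1
  have h1 : ‖R.esymm m‖ ≤ (((R.powersetCard m).map Multiset.prod).map fun z => ‖z‖).sum :=
    norm_multiset_sum_le _
  have h2 : (((R.powersetCard m).map Multiset.prod).map fun z => ‖z‖).sum
      ≤ (Multiset.card (((R.powersetCard m).map Multiset.prod).map fun z => ‖z‖)) • P := by
    apply Multiset.sum_le_card_nsmul
    intro x hx
    obtain ⟨y, hy, rfl⟩ := Multiset.mem_map.mp hx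
    exact hbound y hy
  have hcard : Multiset.card (((R.powersetCard m).map Multiset.prod).map fun z => ‖z‖)
      = (Multiset.card R).choose m := by
    rw [Multiset.card_map, Multiset.card_map, Multiset.card_powersetCard]
  have hchoose : ((Multiset.card R).choose m : ℝ) ≤ (2 : ℝ) ^ (Multiset.card R) := by
    have : (Multiset.card R).choose m ≤ 2 ^ (Multiset.card R) := by
      calc (Multiset.card R).choose m
          ≤ ∑ i ∈ Finset.range (Multiset.card R + 1), (Multiset.card R).choose i :=
            Finset.single_le_sum (fun i _ => Nat.zero_le _) (Finset.mem_range.mpr (by omega))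
        _ = 2 ^ (Multiset.card R) := Nat.sum_range_choose _
    exact_mod_cast this
  have hPnn : 0 ≤ P := prod_max_nonneg R
  calc ‖R.esymm m‖ ≤ _ := h1
    _ ≤ (Multiset.card (((R.powersetCard m).map Multiset.prod).map fun z => ‖z‖)) • P := h2
    _ = ((Multiset.card R).choose m : ℝ) * P := by rw [hcard, nsmul_eq_mul]
    _ ≤ (2 : ℝ) ^ (Multiset.card R) * P := mul_le_mul_of_nonneg_right hchoose hPnn

lemma norm_coeff_le (f : Polynomial ℂ) (j : ℕ) :
    ‖f.coeff j‖ ≤ 2 ^ f.natDegree * _root_.mahlerMeasure f := by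
  by_cases hf : f = 0
  · simp [hf, _root_.mahlerMeasure]
  by_cases hj : f.natDegree < j
  · rw [f.coeff_eq_zero_of_natDegree_lt hj, norm_zero]
    have := mahlerMeasure_nonneg f
    positivity
  push_neg at hj
  have hcard := card_roots_complex f
  have hco : f.coeff j = f.leadingCoeff * ((f.roots.map fun α => X - C α).prod.coeff j) := by
    conv_lhs => rw [← f_eq_prod f]
    rw [coeff_C_mul]
  rw [hco, Multiset.prod_X_sub_C_coeff f.roots (by omega), norm_mul, norm_mul, norm_pow,
    norm_neg, norm_one, one_pow, one_mul]
  have := norm_esymm_le f.roots (Multiset.card f.roots - j) (by omega)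
  calc ‖f.leadingCoeff‖ * ‖f.roots.esymm (Multiset.card f.roots - j)‖
      ≤ ‖f.leadingCoeff‖ * ((2:ℝ) ^ (Multiset.card f.roots) * (f.roots.map fun z => max 1 ‖z‖).prod) :=
        mul_le_mul_of_nonneg_left this (norm_nonneg _)
    _ = 2 ^ f.natDegree * _root_.mahlerMeasure f := by rw [hcard, _root_.mahlerMeasure]; ring


lemma mahler_sq_le_l2sq (f : Polynomial ℂ) : _root_.mahlerMeasure f ^ 2 ≤ l2sq f := by
  by_cases hf : f = 0
  · simp [hf, _root_.mahlerMeasure]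
    exact l2sq_nonneg 0
  classical
  set A := f.roots.filter (fun α => 1 < ‖α‖) with hA
  set B := f.roots.filter (fun α => ¬ 1 < ‖α‖) with hB
  set h : Polynomial ℂ := (A.map fun α => C ((starRingEnd ℂ) α) * X - 1).prod
      * (C f.leadingCoeff * (B.map fun α => X - C α).prod) with hh
  have hsplit : f.roots = A + B := (Multiset.filter_add_not _ _).symm
  have hfprod : f = (A.map fun α => X - C α).prod
      * (C f.leadingCoeff * (B.map fun α => X - C α).prod) := by
    conv_lhs => rw [← f_eq_prod f]
    rw [hsplit, Multiset.map_add, Multiset.prod_add]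
    ring
  have hl2 : l2sq h = l2sq f := by
    rw [hh, l2sq_prod_swap, ← hfprod]
  -- leading coefficient of h
  have hlc : ‖h.leadingCoeff‖ = _root_.mahlerMeasure f := by
    have hlcA : (A.map fun α => C ((starRingEnd ℂ) α) * X - 1).prod.leadingCoeff
        = (A.map fun α => (starRingEnd ℂ) α).prod := by
      rw [leadingCoeff_multiset_prod, Multiset.map_map]
      congr 1
      refine Multiset.map_congr rfl fun x hx => ?_
      have hx1 : 1 < ‖x‖ := (Multiset.mem_filter.mp hx).2
      have hxzero : x ≠ 0 := by
        intro h0; rw [h0] at hx1; simp at hx1; linarith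
      have hxne : (starRingEnd ℂ) x ≠ 0 := star_ne_zero.mpr hxzero
      show (C ((starRingEnd ℂ) x) * X - 1).leadingCoeff = (starRingEnd ℂ) x
      have : C ((starRingEnd ℂ) x) * X - 1 = C ((starRingEnd ℂ) x) * X + C (-1) := by
        rw [map_neg, map_one, ← sub_eq_add_neg]
      rw [this, leadingCoeff_linear hxne]
    have hlcB : ((B.map fun α => X - C α).prod).leadingCoeff = 1 := by
      exact (monic_multiset_prod_of_monic _ _ fun a _ => monic_X_sub_C a).leadingCoeff
    rw [hh, leadingCoeff_mul, leadingCoeff_mul, hlcA, hlcB, leadingCoeff_C, mul_one]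
    rw [norm_mul, norm_mprod, Multiset.map_map]
    have hconj : (A.map ((fun z => ‖z‖) ∘ fun α => (starRingEnd ℂ) α)).prod
        = (A.map fun α => ‖α‖).prod :=
      congrArg Multiset.prod (Multiset.map_congr rfl fun x _ => RCLike.norm_conj x)
    rw [hconj, mahler_eq_filter f, ← hA]
    ring
  have hle : ‖h.leadingCoeff‖ ^ 2 ≤ l2sq h := sq_coeff_le_l2sq h h.natDegree
  rw [hlc, hl2] at hle
  exact hle

lemma l2sq_le_of_natDegree_le {f : Polynomial ℂ} {n : ℕ} (h : f.natDegree ≤ n) :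
    l2sq f ≤ (n + 1 : ℝ) * ((2 : ℝ) ^ n * _root_.mahlerMeasure f) ^ 2 := by
  rw [l2sq_eq_sum_range (lt_of_le_of_lt h (Nat.lt_succ_self n))]
  have hbound : ∀ j ∈ Finset.range (n + 1), ‖f.coeff j‖ ^ 2
      ≤ ((2 : ℝ) ^ n * _root_.mahlerMeasure f) ^ 2 := by
    intro j _
    have h1 : ‖f.coeff j‖ ≤ (2 : ℝ) ^ n * _root_.mahlerMeasure f := by
      refine le_trans (norm_coeff_le f j) ?_
      exact mul_le_mul_of_nonneg_right
        (pow_le_pow_right₀ one_le_two h) (mahlerMeasure_nonneg f)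
    exact pow_le_pow_left₀ (norm_nonneg _) h1 2
  calc ∑ j ∈ Finset.range (n + 1), ‖f.coeff j‖ ^ 2
      ≤ (n + 1) * ((2 : ℝ) ^ n * _root_.mahlerMeasure f) ^ 2 := by
        have := Finset.sum_le_card_nsmul (Finset.range (n + 1)) _ _ hbound
        rwa [Finset.card_range, nsmul_eq_mul, Nat.cast_add, Nat.cast_one] at this


/-- The Graeffe transform: the polynomial whose roots are the squares of the roots. -/
noncomputable def graeffe (p : Polynomial ℂ) : Polynomial ℂ :=
  ∑ j ∈ Finset.range (p.natDegree + 1), C ((p * p.comp (-X)).coeff (2 * j)) * X ^ j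

lemma graeffe_coeff_eq (p : Polynomial ℂ) (j : ℕ) :
    (graeffe p).coeff j = (p * p.comp (-X)).coeff (2 * j) := by
  rw [graeffe, finset_sum_coeff]
  simp only [coeff_C_mul, coeff_X_pow]
  rw [Finset.sum_eq_single j]
  · simp
  · intro b _ hb
    rw [if_neg (Ne.symm hb), mul_zero]
  · intro hj
    rw [Finset.mem_range, not_lt] at hj
    simp only [if_pos, mul_one]
    apply coeff_eq_zero_of_natDegree_lt
    have h1 : (p * p.comp (-X)).natDegree ≤ p.natDegree + (p.comp (-X)).natDegree :=
      natDegree_mul_le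
    have h2 : (p.comp (-X)).natDegree ≤ p.natDegree * (-X : Polynomial ℂ).natDegree :=
      natDegree_comp_le
    rw [natDegree_neg, natDegree_X, mul_one] at h2
    omega

lemma natDegree_graeffe_le (p : Polynomial ℂ) : (graeffe p).natDegree ≤ p.natDegree := by
  apply natDegree_sum_le_of_forall_le
  intro j hj
  rw [Finset.mem_range] at hj
  exact le_trans (natDegree_C_mul_X_pow_le _ _) (by omega)

lemma comp_X_sq_coeff (g : Polynomial ℂ) (j : ℕ) :
    (g.comp (X ^ 2)).coeff (2 * j) = g.coeff j := by
  conv_lhs => rw [g.as_sum_range' (g.natDegree + 1) (Nat.lt_succ_self _)]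
  have hcomp : (∑ i ∈ Finset.range (g.natDegree + 1), (monomial i) (g.coeff i)).comp (X ^ 2)
      = ∑ i ∈ Finset.range (g.natDegree + 1), C (g.coeff i) * X ^ (2 * i) := by
    rw [show ((∑ i ∈ Finset.range (g.natDegree + 1), (monomial i) (g.coeff i)).comp (X ^ 2))
        = eval₂ C (X ^ 2) (∑ i ∈ Finset.range (g.natDegree + 1), (monomial i) (g.coeff i))
        from rfl, eval₂_finset_sum]
    refine Finset.sum_congr rfl fun i _ => ?_
    rw [show eval₂ C ((X : Polynomial ℂ) ^ 2) ((monomial i) (g.coeff i))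
        = ((monomial i) (g.coeff i)).comp (X ^ 2) from rfl, ← C_mul_X_pow_eq_monomial,
      mul_comp, C_comp, X_pow_comp, ← pow_mul]
  rw [hcomp, finset_sum_coeff]
  simp only [coeff_C_mul, coeff_X_pow]
  rw [Finset.sum_eq_single j]
  · simp
  · intro b _ hb
    rw [if_neg (by omega), mul_zero]
  · intro hj
    rw [Finset.mem_range, not_lt] at hj
    simp only [if_pos, mul_one]
    exact coeff_eq_zero_of_natDegree_lt (by omega)

lemma multiset_prod_comp (s : Multiset (Polynomial ℂ)) (q : Polynomial ℂ) :
    s.prod.comp q = (s.map fun r => r.comp q).prod := by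
  induction s using Multiset.induction with
  | empty => simp
  | cons a s ih => simp [mul_comp, ih]

lemma graeffe_eq (p : Polynomial ℂ) (_hp : p ≠ 0) :
    graeffe p = C ((-1) ^ p.natDegree * p.leadingCoeff ^ 2)
      * (p.roots.map fun α => X - C (α ^ 2)).prod := by
  have hcard : Multiset.card p.roots = p.natDegree := card_roots_complex p
  have step1 : p.comp (-X) = C p.leadingCoeff * (p.roots.map fun α => -X - C α).prod := by
    conv_lhs => rw [← f_eq_prod p]
    rw [mul_comp, C_comp, multiset_prod_comp, Multiset.map_map]
    congr 2
    refine Multiset.map_congr rfl fun x _ => ?_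
    show (X - C x).comp (-X) = -X - C x
    rw [sub_comp, X_comp, C_comp]
  have hfac : ∀ α : ℂ, (X - C α) * (-X - C α) = C (-1 : ℂ) * (X ^ 2 - C (α ^ 2)) := by
    intro α
    rw [map_neg, map_one, map_pow]
    ring
  have hprod : (p.roots.map fun α => X - C α).prod * (p.roots.map fun α => -X - C α).prod
      = C (-1 : ℂ) ^ p.natDegree * (p.roots.map fun α => X ^ 2 - C (α ^ 2)).prod := by
    rw [← Multiset.prod_map_mul]
    have hcg : (p.roots.map fun α => (X - C α) * (-X - C α))
        = p.roots.map fun α => C (-1 : ℂ) * (X ^ 2 - C (α ^ 2)) :=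
      Multiset.map_congr rfl fun x _ => hfac x
    rw [hcg, Multiset.prod_map_mul, Multiset.map_const', Multiset.prod_replicate, hcard]
  have lhs_eq : p * p.comp (-X)
      = C (p.leadingCoeff * p.leadingCoeff) * ((p.roots.map fun α => X - C α).prod
        * (p.roots.map fun α => -X - C α).prod) := by
    nth_rw 1 [← f_eq_prod p]
    rw [step1, map_mul]
    ring
  have rhs_eq : (C ((-1) ^ p.natDegree * p.leadingCoeff ^ 2)
        * (p.roots.map fun α => X - C (α ^ 2)).prod).comp (X ^ 2)
      = C ((-1 : ℂ) ^ p.natDegree * p.leadingCoeff ^ 2)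
        * (p.roots.map fun α => X ^ 2 - C (α ^ 2)).prod := by
    rw [mul_comp, C_comp, multiset_prod_comp, Multiset.map_map]
    congr 2
    refine Multiset.map_congr rfl fun x _ => ?_
    show (X - C (x ^ 2)).comp (X ^ 2) = X ^ 2 - C (x ^ 2)
    rw [sub_comp, X_comp, C_comp]
  have step2 : p * p.comp (-X) = (C ((-1) ^ p.natDegree * p.leadingCoeff ^ 2)
      * (p.roots.map fun α => X - C (α ^ 2)).prod).comp (X ^ 2) := by
    rw [lhs_eq, hprod, rhs_eq,
      show C ((-1 : ℂ) ^ p.natDegree * p.leadingCoeff ^ 2)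
        = C (-1 : ℂ) ^ p.natDegree * C p.leadingCoeff ^ 2 from by rw [map_mul, map_pow, map_pow]]
    rw [map_mul]
    ring
  ext j
  rw [graeffe_coeff_eq, step2, comp_X_sq_coeff]

lemma graeffe_zero : graeffe 0 = 0 := by
  ext j
  rw [graeffe_coeff_eq, zero_mul, coeff_zero, coeff_zero]

lemma max_one_sq (x : ℝ) (hx : 0 ≤ x) : max 1 (x ^ 2) = (max 1 x) ^ 2 := by
  rcases le_or_gt x 1 with h | h
  · rw [max_eq_left (pow_le_one₀ hx h), max_eq_left h, one_pow]
  · rw [max_eq_right (le_of_lt h), max_eq_right]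
    nlinarith

lemma mahler_graeffe (p : Polynomial ℂ) :
    _root_.mahlerMeasure (graeffe p) = (_root_.mahlerMeasure p) ^ 2 := by
  by_cases hp : p = 0
  · rw [hp, graeffe_zero]
    simp [_root_.mahlerMeasure]
  have hk : ((-1 : ℂ)) ^ p.natDegree * p.leadingCoeff ^ 2 ≠ 0 := by
    have hc : p.leadingCoeff ≠ 0 := leadingCoeff_ne_zero.mpr hp
    exact mul_ne_zero (pow_ne_zero _ (by norm_num)) (pow_ne_zero _ hc)
  have hmm : (p.roots.map fun α => X - C (α ^ 2))
      = (p.roots.map fun α => α ^ 2).map fun a => X - C a := by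
    rw [Multiset.map_map]
    exact Multiset.map_congr rfl fun x _ => rfl
  have hmonic : ((p.roots.map fun α => α ^ 2).map fun a => X - C a).prod.Monic :=
    monic_multiset_prod_of_monic _ _ fun a _ => monic_X_sub_C a
  have hroots : (graeffe p).roots = p.roots.map fun α => α ^ 2 := by
    rw [graeffe_eq p hp, roots_C_mul _ hk, hmm, roots_multiset_prod_X_sub_C]
  have hlc : (graeffe p).leadingCoeff = (-1 : ℂ) ^ p.natDegree * p.leadingCoeff ^ 2 := by
    rw [graeffe_eq p hp, leadingCoeff_mul, leadingCoeff_C, hmm,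
      hmonic.leadingCoeff, mul_one]
  rw [_root_.mahlerMeasure, _root_.mahlerMeasure, hroots, hlc]
  have hnorm : ‖(-1 : ℂ) ^ p.natDegree * p.leadingCoeff ^ 2‖ = ‖p.leadingCoeff‖ ^ 2 := by
    rw [norm_mul, norm_pow, norm_pow, norm_neg, norm_one, one_pow, one_mul]
  rw [hnorm, Multiset.map_map]
  have hmax : (p.roots.map ((fun z => max 1 ‖z‖) ∘ fun α => α ^ 2)).prod
      = (p.roots.map fun z => (max 1 ‖z‖) * (max 1 ‖z‖)).prod := by
    refine congrArg Multiset.prod (Multiset.map_congr rfl fun x _ => ?_)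
    show max 1 ‖x ^ 2‖ = max 1 ‖x‖ * max 1 ‖x‖
    rw [norm_pow, max_one_sq _ (norm_nonneg x), sq]
  rw [hmax, Multiset.prod_map_mul]
  ring


lemma coeff_comp_neg_X (p : Polynomial ℂ) (j : ℕ) :
    (p.comp (-X)).coeff j = (-1) ^ j * p.coeff j := by
  induction p using Polynomial.induction_on' with
  | add p q hp hq => rw [add_comp, coeff_add, hp, hq, coeff_add]; ring
  | monomial m a =>
    rw [← C_mul_X_pow_eq_monomial, mul_comp, C_comp, X_pow_comp, neg_pow,
      show ((-1 : Polynomial ℂ)) ^ m = C ((-1 : ℂ) ^ m) from by rw [map_pow, map_neg, map_one],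
      ← mul_assoc, ← map_mul, coeff_C_mul, coeff_C_mul, coeff_X_pow]
    by_cases h : j = m
    · subst h; simp [mul_comm]
    · simp [h]

/-- the polynomial determined by the coefficient vector -/
noncomputable def Pz (n : ℕ) (z : Fin (n + 1) → ℂ) : Polynomial ℂ :=
  ∑ i : Fin (n + 1), C (z i) * X ^ (n - (i : ℕ))

lemma natDegree_Pz_le (n : ℕ) (z : Fin (n + 1) → ℂ) : (Pz n z).natDegree ≤ n :=
  natDegree_sum_le_of_forall_le _ _ fun i _ =>
    le_trans (natDegree_C_mul_X_pow_le _ _) (by omega)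

lemma continuous_coeff_Pz (n : ℕ) (j : ℕ) :
    Continuous fun z : Fin (n + 1) → ℂ => (Pz n z).coeff j := by
  simp only [Pz, finset_sum_coeff, coeff_C_mul, coeff_X_pow]
  apply continuous_finset_sum
  intro i _
  exact (continuous_apply i).mul continuous_const

lemma natDegree_iter_le (n k : ℕ) (z : Fin (n + 1) → ℂ) :
    (graeffe^[k] (Pz n z)).natDegree ≤ n := by
  induction k with
  | zero => exact natDegree_Pz_le n z
  | succ k ih =>
    rw [Function.iterate_succ_apply']
    exact le_trans (natDegree_graeffe_le _) ih

lemma continuous_coeff_iter (n k : ℕ) :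
    ∀ j : ℕ, Continuous fun z : Fin (n + 1) → ℂ => (graeffe^[k] (Pz n z)).coeff j := by
  induction k with
  | zero => exact fun j => continuous_coeff_Pz n j
  | succ k ih =>
    intro j
    have heq : ∀ z : Fin (n + 1) → ℂ, (graeffe^[k + 1] (Pz n z)).coeff j
        = ∑ x ∈ Finset.HasAntidiagonal.antidiagonal (2 * j),
            (graeffe^[k] (Pz n z)).coeff x.1
              * ((-1) ^ x.2 * (graeffe^[k] (Pz n z)).coeff x.2) := by
      intro z
      rw [Function.iterate_succ_apply', graeffe_coeff_eq, coeff_mul]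
      exact Finset.sum_congr rfl fun x _ => by rw [coeff_comp_neg_X]
    simp only [heq]
    apply continuous_finset_sum
    intro x _
    exact (ih x.1).mul (continuous_const.mul (ih x.2))

lemma mahler_iter (n k : ℕ) (z : Fin (n + 1) → ℂ) :
    _root_.mahlerMeasure (graeffe^[k] (Pz n z)) = _root_.mahlerMeasure (Pz n z) ^ (2 ^ k) := by
  induction k with
  | zero => simp
  | succ k ih =>
    rw [Function.iterate_succ_apply', mahler_graeffe, ih, ← pow_mul, pow_succ]

lemma mahler_Pz_continuous (n : ℕ) :
    Continuous fun z : Fin (n + 1) → ℂ => _root_.mahlerMeasure (Pz n z) := by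
  -- notation
  set m : (Fin (n + 1) → ℂ) → ℝ := fun z => _root_.mahlerMeasure (Pz n z) with hm
  set K : ℝ := Real.sqrt (n + 1) * 2 ^ n with hK
  have hsqrt1 : (1 : ℝ) ≤ Real.sqrt (n + 1) := by
    have h := Real.sqrt_le_sqrt (show (1:ℝ) ≤ (n:ℝ) + 1 by have := Nat.cast_nonneg (α:=ℝ) n; linarith)
    rwa [Real.sqrt_one] at h
  have hK1 : (1 : ℝ) ≤ K := by
    rw [hK]
    calc (1:ℝ) = 1 * 1 := by ring
    _ ≤ _ := mul_le_mul hsqrt1 (one_le_pow₀ one_le_two) zero_le_one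
        (le_trans zero_le_one hsqrt1)
  have hKpos : (0 : ℝ) < K := lt_of_lt_of_le one_pos hK1
  -- l2sq of iterates as finite sums
  have hl2 : ∀ k (z : Fin (n + 1) → ℂ), l2sq (graeffe^[k] (Pz n z))
      = ∑ j ∈ Finset.range (n + 1), ‖(graeffe^[k] (Pz n z)).coeff j‖ ^ 2 :=
    fun k z => l2sq_eq_sum_range (lt_of_le_of_lt (natDegree_iter_le n k z) (Nat.lt_succ_self n))
  have hScont : ∀ k, Continuous fun z : Fin (n + 1) → ℂ => l2sq (graeffe^[k] (Pz n z)) := by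
    intro k
    simp only [hl2 k]
    apply continuous_finset_sum
    intro j _
    exact ((continuous_coeff_iter n k j).norm).pow 2
  -- lower and upper bounds for sqrt l2sq
  have hlow : ∀ k (z : Fin (n + 1) → ℂ),
      m z ^ (2 ^ k) ≤ Real.sqrt (l2sq (graeffe^[k] (Pz n z))) := by
    intro k z
    rw [← mahler_iter n k z]
    have h1 := mahler_sq_le_l2sq (graeffe^[k] (Pz n z))
    have h2 := mahlerMeasure_nonneg (graeffe^[k] (Pz n z))
    nlinarith [Real.sq_sqrt (l2sq_nonneg (graeffe^[k] (Pz n z))),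
      Real.sqrt_nonneg (l2sq (graeffe^[k] (Pz n z)))]
  have hup : ∀ k (z : Fin (n + 1) → ℂ),
      Real.sqrt (l2sq (graeffe^[k] (Pz n z))) ≤ K * m z ^ (2 ^ k) := by
    intro k z
    have h1 := l2sq_le_of_natDegree_le (natDegree_iter_le n k z)
    have h2 : Real.sqrt ((n + 1 : ℝ) * ((2:ℝ) ^ n * _root_.mahlerMeasure (graeffe^[k] (Pz n z))) ^ 2)
        = K * _root_.mahlerMeasure (graeffe^[k] (Pz n z)) := by
      rw [Real.sqrt_mul (by positivity), Real.sqrt_sq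
        (mul_nonneg (by positivity) (mahlerMeasure_nonneg _)), hK]
      ring
    have h3 := Real.sqrt_le_sqrt h1
    rw [h2, mahler_iter n k z] at h3
    exact h3
  -- powers of the bounds
  have hepos : ∀ k : ℕ, (0:ℝ) ≤ ((2:ℝ) ^ k)⁻¹ := fun k => by positivity
  have hxe : ∀ k (z : Fin (n + 1) → ℂ), (m z ^ (2 ^ k)) ^ (((2:ℝ) ^ k)⁻¹ : ℝ) = m z := by
    intro k z
    have hmz : 0 ≤ m z := mahlerMeasure_nonneg _
    rw [show (m z ^ (2 ^ k) : ℝ) = m z ^ (((2 ^ k : ℕ) : ℝ)) from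
      (Real.rpow_natCast (m z) (2 ^ k)).symm,
      ← Real.rpow_mul hmz, show (((2 ^ k : ℕ) : ℝ)) = (2:ℝ) ^ k by push_cast; ring,
      mul_inv_cancel₀ (by positivity), Real.rpow_one]
  have hA_low : ∀ k (z : Fin (n + 1) → ℂ),
      m z ≤ Real.sqrt (l2sq (graeffe^[k] (Pz n z))) ^ (((2:ℝ) ^ k)⁻¹ : ℝ) := by
    intro k z
    have h := Real.rpow_le_rpow (pow_nonneg (mahlerMeasure_nonneg _) _) (hlow k z) (hepos k)
    rwa [hxe k z] at h
  have hA_up : ∀ k (z : Fin (n + 1) → ℂ),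
      Real.sqrt (l2sq (graeffe^[k] (Pz n z))) ^ (((2:ℝ) ^ k)⁻¹ : ℝ)
        ≤ K ^ (((2:ℝ) ^ k)⁻¹ : ℝ) * m z := by
    intro k z
    have h := Real.rpow_le_rpow (Real.sqrt_nonneg _) (hup k z) (hepos k)
    rwa [Real.mul_rpow (le_of_lt hKpos) (pow_nonneg (mahlerMeasure_nonneg _) _), hxe k z] at h
  have hKe1 : ∀ k : ℕ, (1:ℝ) ≤ K ^ (((2:ℝ) ^ k)⁻¹ : ℝ) := by
    intro k
    have h := Real.rpow_le_rpow zero_le_one hK1 (hepos k)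
    rwa [Real.one_rpow] at h
  -- continuity of the approximants
  have hAcont : ∀ k : ℕ, Continuous fun z : Fin (n + 1) → ℂ =>
      Real.sqrt (l2sq (graeffe^[k] (Pz n z))) ^ (((2:ℝ) ^ k)⁻¹ : ℝ) := by
    intro k
    exact (Real.continuous_sqrt.comp (hScont k)).rpow_const (fun z => Or.inr (hepos k))
  -- conclusion via locally uniform approximation
  rw [continuous_iff_continuousAt]
  intro z₀
  apply continuousAt_of_locally_uniform_approx_of_continuousAt
  intro u hu
  obtain ⟨ε, εpos, hε⟩ := Metric.mem_uniformity_dist.mp hu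
  set c₀ : ℝ := l2sq (graeffe^[0] (Pz n z₀)) with hc₀
  set t : Set (Fin (n + 1) → ℂ) := {z | l2sq (graeffe^[0] (Pz n z)) < c₀ + 1} with ht
  have htmem : t ∈ nhds z₀ := by
    apply IsOpen.mem_nhds (isOpen_lt (hScont 0) continuous_const)
    show l2sq (graeffe^[0] (Pz n z₀)) < c₀ + 1
    rw [← hc₀]; linarith
  set B : ℝ := Real.sqrt (c₀ + 1) with hB
  have hmB : ∀ y ∈ t, m y ≤ B := by
    intro y hy
    have h1 := hlow 0 y
    rw [pow_zero, pow_one] at h1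
    exact le_trans h1 (Real.sqrt_le_sqrt (le_of_lt hy))
  have hBnn : 0 ≤ B := Real.sqrt_nonneg _
  -- choose k large enough
  have he0 : Filter.Tendsto (fun k : ℕ => (((2:ℝ) ^ k)⁻¹ : ℝ)) Filter.atTop (nhds 0) := by
    simp only [← inv_pow]
    exact tendsto_pow_atTop_nhds_zero_of_lt_one (by norm_num) (by norm_num)
  have hKe : Filter.Tendsto (fun k : ℕ => K ^ (((2:ℝ) ^ k)⁻¹ : ℝ)) Filter.atTop (nhds 1) := by
    have hc : ContinuousAt (fun x : ℝ => K ^ x) 0 :=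
      Real.continuousAt_const_rpow (ne_of_gt hKpos)
    have h := hc.tendsto.comp he0
    rwa [Real.rpow_zero] at h
  have herr : Filter.Tendsto (fun k : ℕ => (K ^ (((2:ℝ) ^ k)⁻¹ : ℝ) - 1) * B)
      Filter.atTop (nhds 0) := by
    have h := (hKe.sub_const 1).mul_const B
    simpa using h
  obtain ⟨k, hk⟩ := (herr.eventually_lt_const εpos).exists
  refine ⟨t, htmem, fun z => Real.sqrt (l2sq (graeffe^[k] (Pz n z))) ^ (((2:ℝ) ^ k)⁻¹ : ℝ),
    (hAcont k).continuousAt, ?_⟩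
  intro y hy
  apply hε
  rw [Real.dist_eq]
  have h1 := hA_low k y
  have h2 := hA_up k y
  have h3 := hmB y hy
  have h4 := hKe1 k
  have h5 : Real.sqrt (l2sq (graeffe^[k] (Pz n y))) ^ (((2:ℝ) ^ k)⁻¹ : ℝ) - m y
      ≤ (K ^ (((2:ℝ) ^ k)⁻¹ : ℝ) - 1) * B := by
    have hmy : 0 ≤ m y := mahlerMeasure_nonneg _
    nlinarith
  rw [abs_of_nonpos (by linarith)]
  linarith

end MahlerAux


/-- The Mahler measure `ℂ^{n+1} → [0,∞)`, `(z₀,…,z_n) ↦ M(z₀ Xⁿ + ⋯ + z_n)`, is continuous. -/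
theorem mahlerMeasure_continuous (n : ℕ) :
    Continuous fun z : Fin (n + 1) → ℂ =>
      _root_.mahlerMeasure (∑ i : Fin (n + 1), C (z i) * X ^ (n - (i : ℕ))) := by
  exact MahlerAux.mahler_Pz_continuous n
end
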